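/- Let (W, S) be a Coxeter system and let T, T' ⊆ S. If w, w' ∈ W satisfy wW_T ⊆ w'W_{T'} for the standard parabolic subgroups W_T = ⟨T⟩ and W_{T'} = ⟨T'⟩, then T ⊆ T' and w⁻¹w' ∈ W_{T'}. -/

import Mathlib

namespace CoxHelper

variable {B : Type*} (M : CoxeterMatrix B)

/-- Cosine matrix entries of the standard geometric representation. -/
noncomputable def kk (b b' : B) : ℝ := -Real.cos (Real.pi / M b b')

lemma kk_diag (b : B) : kk M b b = 1 := by
  simp [kk, M.diagonal b, Real.cos_pi]

lemma kk_symm (b b' : B) : kk M b b' = kk M b' b := by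
  rw [kk, kk, M.symmetric]

/-- The simple root. -/
noncomputable def al (b : B) : B →₀ ℝ := Finsupp.single b 1

/-- Pairing with the simple root `b`. -/
noncomputable def phi (b : B) : (B →₀ ℝ) →ₗ[ℝ] ℝ :=
  Finsupp.linearCombination ℝ (fun b' => kk M b b')

lemma phi_single (b b' : B) (x : ℝ) : phi M b (Finsupp.single b' x) = x * kk M b b' := by
  simp [phi, Finsupp.linearCombination_single, smul_eq_mul]

lemma phi_al (b b' : B) : phi M b (al b') = kk M b b' := by
  simp [al, phi_single]

/-- The simple reflection acting on `B →₀ ℝ`. -/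
noncomputable def sig (b : B) : (B →₀ ℝ) → (B →₀ ℝ) := fun v => v - (2 * phi M b v) • al b

lemma sig_invol (b : B) : Function.Involutive (sig M b) := by
  intro v
  simp only [sig, map_sub, map_smul, phi_al, kk_diag, smul_eq_mul, mul_one]
  module

end CoxHelper

namespace CoxHelper

variable {B : Type*} (M : CoxeterMatrix B)

/-- The simple reflection as a permutation. -/
noncomputable def sigPerm (b : B) : Equiv.Perm (B →₀ ℝ) := (sig_invol M b).toPerm

@[simp] lemma sigPerm_apply (b : B) (v : B →₀ ℝ) : sigPerm M b v = sig M b v := rfl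

lemma sig_combo_i (i j : B) (X Y : ℝ) :
    sig M i (X • al i + Y • al j) = (-X - 2 * kk M i j * Y) • al i + Y • al j := by
  simp only [sig, map_add, map_smul, phi_al, kk_diag, smul_eq_mul, mul_one]
  module

lemma sig_combo_j (i j : B) (X Y : ℝ) :
    sig M j (X • al i + Y • al j) = X • al i + (-Y - 2 * kk M i j * X) • al j := by
  simp only [sig, map_add, map_smul, phi_al, kk_diag, kk_symm M j i, smul_eq_mul, mul_one]
  module

lemma sig_fix (b : B) (u : B →₀ ℝ) (hu : phi M b u = 0) : sig M b u = u := by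
  simp [sig, hu]

lemma sig_split (b : B) (u P : B →₀ ℝ) (hu : phi M b u = 0) :
    sig M b (u + P) = u + sig M b P := by
  simp only [sig, map_add, hu, zero_add]
  module

end CoxHelper

namespace CoxHelper

variable {B : Type*} (M : CoxeterMatrix B)

/-- Real plane inside `B →₀ ℝ` parameterized by complex numbers. -/
noncomputable def Phi (i j : B) (c s : ℝ) (z : ℂ) : B →₀ ℝ :=
  (z.re - z.im * (c/s)) • al i + (-(z.im)/s) • al j

section Plane

variable {i j : B} {c s : ℝ} (hk : kk M i j = -c) (hs : s ≠ 0) (hsc : s^2 + c^2 = 1)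

include hk hs

lemma K1 (z : ℂ) : sig M i (Phi i j c s z) = Phi i j c s (-(starRingEnd ℂ) z) := by
  rw [Phi, sig_combo_i, hk, Phi]
  have h1 : (-(starRingEnd ℂ) z).re = -z.re := by simp
  have h2 : (-(starRingEnd ℂ) z).im = z.im := by simp
  rw [h1, h2]
  congr 1
  congr 1
  field_simp
  ring

include hsc

lemma K2 (z : ℂ) :
    sig M j (Phi i j c s z) =
      Phi i j c s (-(((c^2 - s^2 : ℝ) : ℂ) + ((2*s*c : ℝ) : ℂ) * Complex.I) * (starRingEnd ℂ) z) := by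
  set a := c^2 - s^2 with ha
  set b := 2*s*c with hb
  rw [Phi, sig_combo_j, hk, Phi]
  have h1 : (-((a : ℂ) + (b : ℂ) * Complex.I) * (starRingEnd ℂ) z).re
      = -(a * z.re + b * z.im) := by
    simp [Complex.mul_re]
    ring
  have h2 : (-((a : ℂ) + (b : ℂ) * Complex.I) * (starRingEnd ℂ) z).im
      = -(b * z.re - a * z.im) := by
    simp [Complex.mul_im]
    ring
  rw [h1, h2]
  congr 1
  · congr 1
    rw [ha, hb]
    field_simp
    linear_combination (z.im * c - z.re * s) * hsc
  · congr 1
    rw [ha, hb]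
    field_simp
    linear_combination (-z.im) * hsc

end Plane

end CoxHelper

namespace CoxHelper

variable {B : Type*} (M : CoxeterMatrix B)

theorem isLiftable : M.IsLiftable (fun b => sigPerm M b) := by
  intro i j
  rcases eq_or_ne i j with rfl | hij
  · rw [M.diagonal, pow_one]
    apply Equiv.ext
    intro v
    simp only [Equiv.Perm.mul_apply, sigPerm_apply, Equiv.Perm.one_apply]
    exact sig_invol M i v
  rcases Nat.eq_zero_or_pos (M i j) with hm0 | hmpos
  · rw [hm0, pow_zero]
  have hm2 : 2 ≤ M i j := by
    have h1 := M.off_diagonal i j hij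
    omega
  set m : ℕ := M i j with hmdef
  -- real constants
  set θ : ℝ := Real.pi / m with hθ
  have hθpos : 0 < θ := by
    apply div_pos Real.pi_pos
    exact_mod_cast (by omega : 0 < m)
  have hθlt : θ < Real.pi := by
    rw [hθ]
    apply div_lt_self Real.pi_pos
    exact_mod_cast (by omega : 1 < m)
  set c : ℝ := Real.cos θ with hc
  set s : ℝ := Real.sin θ with hsdef
  have hs : s ≠ 0 := ne_of_gt (Real.sin_pos_of_pos_of_lt_pi hθpos hθlt)
  have hsc : s^2 + c^2 = 1 := Real.sin_sq_add_cos_sq θ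
  have hk : kk M i j = -c := by rw [kk, ← hmdef, ← hθ, hc]
  -- the rotation multiplier
  set ω : ℂ := ((c^2 - s^2 : ℝ) : ℂ) + ((2*s*c : ℝ) : ℂ) * Complex.I with hω
  have hωexp : Complex.exp (((2*θ : ℝ) : ℂ) * Complex.I) = ω := by
    apply Complex.ext
    · rw [Complex.exp_ofReal_mul_I_re]
      have hre : ω.re = c^2 - s^2 := by simp [hω, ← Complex.ofReal_pow]
      rw [hre, hc, hsdef, Real.cos_two_mul']
    · rw [Complex.exp_ofReal_mul_I_im]
      have him : ω.im = 2*s*c := by simp [hω, ← Complex.ofReal_pow]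
      rw [him, hc, hsdef, Real.sin_two_mul]
  have hωm : ((starRingEnd ℂ) ω)^m = 1 := by
    rw [← map_pow, ← hωexp, ← Complex.exp_nat_mul]
    have : ((m : ℂ)) * (((2*θ : ℝ) : ℂ) * Complex.I) = 2 * (Real.pi : ℂ) * Complex.I := by
      have hm' : (m : ℝ) ≠ 0 := by
        exact_mod_cast (by omega : m ≠ 0)
      have : (m : ℝ) * (2*θ) = 2 * Real.pi := by
        rw [hθ]
        field_simp
      calc ((m : ℂ)) * (((2*θ : ℝ) : ℂ) * Complex.I)
          = (((m : ℝ) * (2*θ) : ℝ) : ℂ) * Complex.I := by push_cast; ring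
        _ = 2 * (Real.pi : ℂ) * Complex.I := by rw [this]; push_cast; ring
    rw [this, Complex.exp_two_pi_mul_I, map_one]
  -- now prove the relation pointwise
  have main : ∀ v : B →₀ ℝ, ((sigPerm M i * sigPerm M j) ^ m) v = v := by
    intro v
    set p : ℝ := phi M i v with hp
    set q : ℝ := phi M j v with hq
    set x : ℝ := (p + c*q)/s^2 with hx
    set y : ℝ := (q + c*p)/s^2 with hy
    set u : (B →₀ ℝ) := v - (x • al i + y • al j) with hu
    have hui : phi M i u = 0 := by
      rw [hu, map_sub, map_add, map_smul, map_smul, phi_al, phi_al, kk_diag, hk, ← hp]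
      rw [hx, hy]
      simp only [smul_eq_mul]
      field_simp
      linear_combination p * hsc
    have huj : phi M j u = 0 := by
      rw [hu, map_sub, map_add, map_smul, map_smul, phi_al, phi_al, kk_diag, kk_symm M j i, hk,
        ← hq]
      rw [hx, hy]
      simp only [smul_eq_mul]
      field_simp
      linear_combination q * hsc
    set z₀ : ℂ := ⟨x - y*c, -(y*s)⟩ with hz
    have hPhiz₀ : Phi i j c s z₀ = x • al i + y • al j := by
      rw [Phi]
      have h1 : (z₀.re - z₀.im * (c/s)) = x := by
        rw [hz]
        field_simp
        ring
      have h2 : (-(z₀.im)/s) = y := by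
        rw [hz]
        field_simp
      rw [h1, h2]
    have hgstep : ∀ z : ℂ,
        sig M i (sig M j (Phi i j c s z)) = Phi i j c s ((starRingEnd ℂ) ω * z) := by
      intro z
      rw [K2 M hk hs hsc, K1 M hk hs]
      congr 1
      rw [map_mul, map_neg, Complex.conj_conj, neg_mul, neg_neg, ← hω]
    have key : ∀ n : ℕ,
        ((sigPerm M i * sigPerm M j) ^ n) v = u + Phi i j c s (((starRingEnd ℂ) ω)^n * z₀) := by
      intro n
      induction n with
      | zero =>
        simp only [pow_zero, Equiv.Perm.one_apply, one_mul, hPhiz₀]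
        rw [hu]
        abel
      | succ n ih =>
        rw [pow_succ', Equiv.Perm.mul_apply, ih, Equiv.Perm.mul_apply, sigPerm_apply,
          sigPerm_apply, sig_split M j _ _ huj, sig_split M i _ _ hui, hgstep]
        rw [pow_succ']
        ring_nf
    rw [key m, hωm, one_mul, hPhiz₀, hu]
    abel
  apply Equiv.ext
  intro v
  rw [Equiv.Perm.one_apply]
  exact main v

end CoxHelper

namespace CoxHelper

variable {B : Type*} {W : Type*} [Group W] {M : CoxeterMatrix B} (cs : CoxeterSystem M W)

/-- The geometric representation of the Coxeter group as permutations of `B →₀ ℝ`. -/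
noncomputable def rho : W →* Equiv.Perm (B →₀ ℝ) :=
  cs.lift ⟨fun b => sigPerm M b, isLiftable M⟩

@[simp] lemma rho_simple (b : B) : rho cs (cs.simple b) = sigPerm M b :=
  cs.lift_apply_simple _ b

theorem mem_of_simple_mem_closure {T' : Set B} {t : B}
    (h : cs.simple t ∈ Subgroup.closure (cs.simple '' T')) : t ∈ T' := by
  by_contra ht
  have inv : ∀ u ∈ Subgroup.closure (cs.simple '' T'), ∀ v : B →₀ ℝ, (rho cs u v) t = v t := by
    intro u hu
    induction hu using Subgroup.closure_induction with
    | mem g hg =>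
      obtain ⟨b, hb, rfl⟩ := hg
      intro v
      rw [rho_simple, sigPerm_apply, sig]
      have hbt : b ≠ t := fun hh => ht (hh ▸ hb)
      simp [al, Finsupp.single_apply, hbt]
    | one => intro v; simp
    | mul g g' _ _ hg hg' =>
      intro v
      rw [map_mul, Equiv.Perm.mul_apply, hg, hg']
    | inv g hgmem hg =>
      intro v
      have h2 := hg ((rho cs g⁻¹) v)
      have h3 : (rho cs g) ((rho cs g⁻¹) v) = v := by
        rw [← Equiv.Perm.mul_apply, ← map_mul, mul_inv_cancel, map_one, Equiv.Perm.one_apply]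
      rw [h3] at h2
      exact h2.symm
  have h1 := inv _ h (al t)
  rw [rho_simple, sigPerm_apply, sig, phi_al, kk_diag] at h1
  simp [al, Finsupp.single_apply] at h1

end CoxHelper

open Pointwise
theorem stmt_11 {B W : Type*} [Group W] (M : CoxeterMatrix B)
    (cs : CoxeterSystem M W) (T T' : Set B) (w w' : W)
    (h : w • ((Subgroup.closure (cs.simple '' T) : Subgroup W) : Set W) ⊆
         w' • ((Subgroup.closure (cs.simple '' T') : Subgroup W) : Set W)) :
    T ⊆ T' ∧ w⁻¹ * w' ∈ Subgroup.closure (cs.simple '' T') := by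
  have h1 : w'⁻¹ * w ∈ Subgroup.closure (cs.simple '' T') := by
    have hw : w ∈ w' • ((Subgroup.closure (cs.simple '' T') : Subgroup W) : Set W) := by
      apply h
      exact ⟨1, Subgroup.one_mem _, by simp⟩
    rwa [Set.mem_smul_set_iff_inv_smul_mem, smul_eq_mul] at hw
  constructor
  · intro t htT
    apply CoxHelper.mem_of_simple_mem_closure cs
    have hws : w * cs.simple t ∈
        w' • ((Subgroup.closure (cs.simple '' T') : Subgroup W) : Set W) := by
      apply h
      exact ⟨cs.simple t, Subgroup.subset_closure (Set.mem_image_of_mem _ htT), by simp⟩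
    rw [Set.mem_smul_set_iff_inv_smul_mem, smul_eq_mul] at hws
    have heq : cs.simple t = (w'⁻¹ * w)⁻¹ * (w'⁻¹ * (w * cs.simple t)) := by group
    rw [heq]
    exact Subgroup.mul_mem _ (Subgroup.inv_mem _ h1) hws
  · have heq : w⁻¹ * w' = (w'⁻¹ * w)⁻¹ := by group
    rw [heq]
    exact Subgroup.inv_mem _ h1
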